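/- Let 1 < p < ∞ and let M ⊂ ℝ² be an infinite set contained in a line whose pairwise ℓ_p-distances are all distinct (for x, x', y, y' ∈ M with x ≠ x', y ≠ y', the equality ‖x − x'‖_p = ‖y − y'‖_p implies {x, x'} = {y, y'}). If e and f are ℓ_p-isometric copies of M whose intersection e ∩ f contains at least 3 points, then e = f. -/

import Mathlib

/-- The ℓ_p-norm on the plane ℝ² (represented as `Fin 2 → ℝ`). -/
noncomputable def lpNorm (p : ℝ) (x : Fin 2 → ℝ) : ℝ :=
  (|x 0| ^ p + |x 1| ^ p) ^ (1 / p)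

/-- `M'` is an `N`-isometric copy of `M`: there is a bijection from `M` onto `M'`
preserving `N`-distances. -/
def IsometricCopy (N : (Fin 2 → ℝ) → ℝ) (M M' : Set (Fin 2 → ℝ)) : Prop :=
  ∃ f : (Fin 2 → ℝ) → (Fin 2 → ℝ), Set.BijOn f M M' ∧
    ∀ x ∈ M, ∀ y ∈ M, N (f x - f y) = N (x - y)

open Real Set





lemma lpNorm_nonneg (p : ℝ) (x : Fin 2 → ℝ) : 0 ≤ lpNorm p x :=
  rpow_nonneg (add_nonneg (rpow_nonneg (abs_nonneg _) _) (rpow_nonneg (abs_nonneg _) _)) _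

lemma lpNorm_pos {p : ℝ} (hp : 1 < p) {x : Fin 2 → ℝ} (hx : x ≠ 0) : 0 < lpNorm p x := by
  obtain ⟨i, hi⟩ := Function.ne_iff.mp hx
  have hi' : x i ≠ 0 := hi
  have hsum : 0 < |x 0| ^ p + |x 1| ^ p := by
    fin_cases i
    · exact add_pos_of_pos_of_nonneg (rpow_pos_of_pos (abs_pos.mpr hi') p)
        (rpow_nonneg (abs_nonneg _) _)
    · exact add_pos_of_nonneg_of_pos (rpow_nonneg (abs_nonneg _) _)
        (rpow_pos_of_pos (abs_pos.mpr hi') p)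
  exact rpow_pos_of_pos hsum _

lemma lpNorm_smul {p : ℝ} (hp : 1 < p) (t : ℝ) (x : Fin 2 → ℝ) :
    lpNorm p (t • x) = |t| * lpNorm p x := by
  have hp0 : p ≠ 0 := by positivity
  unfold lpNorm
  have h0 : (t • x) 0 = t * x 0 := rfl
  have h1 : (t • x) 1 = t * x 1 := rfl
  rw [h0, h1, abs_mul, abs_mul, mul_rpow (abs_nonneg _) (abs_nonneg _),
    mul_rpow (abs_nonneg _) (abs_nonneg _), ← mul_add,
    mul_rpow (rpow_nonneg (abs_nonneg _) _)
      (add_nonneg (rpow_nonneg (abs_nonneg _) _) (rpow_nonneg (abs_nonneg _) _)),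
    ← rpow_mul (abs_nonneg _), mul_one_div_cancel hp0, rpow_one]




-- convexity of |·|^p
lemma abs_rpow_cvx {p a b x y : ℝ} (hp : 1 < p) (ha : 0 ≤ a) (hb : 0 ≤ b) (hab : a + b = 1) :
    |a * x + b * y| ^ p ≤ a * |x| ^ p + b * |y| ^ p := by
  have h1 : |a * x + b * y| ≤ a * |x| + b * |y| := by
    calc |a * x + b * y| ≤ |a * x| + |b * y| := abs_add_le _ _
    _ = a * |x| + b * |y| := by rw [abs_mul, abs_mul, abs_of_nonneg ha, abs_of_nonneg hb]
  calc |a * x + b * y| ^ p ≤ (a * |x| + b * |y|) ^ p :=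
        rpow_le_rpow (abs_nonneg _) h1 (by positivity)
  _ ≤ a * |x| ^ p + b * |y| ^ p := by
      have := (convexOn_rpow hp.le).2 (mem_Ici.mpr (abs_nonneg x)) (mem_Ici.mpr (abs_nonneg y))
        ha hb hab
      simpa using this

lemma abs_rpow_strict {p a b x y : ℝ} (hp : 1 < p) (ha : 0 < a) (hb : 0 < b) (hab : a + b = 1)
    (hxy : x ≠ y) : |a * x + b * y| ^ p < a * |x| ^ p + b * |y| ^ p := by
  rcases eq_or_ne |x| |y| with habs | habs
  · -- |x| = |y|, x ≠ y ⇒ x = -y, y ≠ 0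
    have hxny : x = -y := by
      rcases abs_eq_abs.mp habs with h | h
      · exact absurd h hxy
      · exact h
    have hy0 : y ≠ 0 := by rintro rfl; simp [hxny] at hxy
    have hval : |a * x + b * y| = |b - a| * |y| := by
      rw [hxny]; rw [show a * -y + b * y = (b - a) * y by ring, abs_mul]
    have hba : |b - a| < 1 := by
      rw [abs_lt]; constructor <;> linarith
    have hlt : |a * x + b * y| < |y| := by
      rw [hval]
      calc |b - a| * |y| < 1 * |y| := by
            exact mul_lt_mul_of_pos_right hba (abs_pos.mpr hy0)
      _ = |y| := one_mul _
    calc |a * x + b * y| ^ p < |y| ^ p := rpow_lt_rpow (abs_nonneg _) hlt (by positivity)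
    _ = a * |y| ^ p + b * |y| ^ p := by rw [← add_mul, hab, one_mul]
    _ = a * |x| ^ p + b * |y| ^ p := by rw [habs]
  · have h1 : |a * x + b * y| ≤ a * |x| + b * |y| := by
      calc |a * x + b * y| ≤ |a * x| + |b * y| := abs_add_le _ _
      _ = a * |x| + b * |y| := by rw [abs_mul, abs_mul, abs_of_pos ha, abs_of_pos hb]
    calc |a * x + b * y| ^ p ≤ (a * |x| + b * |y|) ^ p :=
          rpow_le_rpow (abs_nonneg _) h1 (by positivity)
    _ < a * |x| ^ p + b * |y| ^ p := by
        have := (strictConvexOn_rpow hp).2 (mem_Ici.mpr (abs_nonneg x))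
          (mem_Ici.mpr (abs_nonneg y)) habs ha hb hab
        simpa using this




lemma lpNorm_rpow {p : ℝ} (hp : 1 < p) (x : Fin 2 → ℝ) :
    (lpNorm p x) ^ p = |x 0| ^ p + |x 1| ^ p := by
  have hp0 : p ≠ 0 := by positivity
  unfold lpNorm
  rw [← rpow_mul (by positivity), one_div_mul_cancel hp0, rpow_one]

lemma lpNorm_add_eq {p : ℝ} (hp : 1 < p) {u v : Fin 2 → ℝ} (hu : u ≠ 0) (hv : v ≠ 0)
    (h : lpNorm p (u + v) = lpNorm p u + lpNorm p v) : ∃ c : ℝ, 0 < c ∧ u = c • v := by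
  set A := lpNorm p u with hA
  set B := lpNorm p v with hB
  have hA0 : 0 < A := lpNorm_pos hp hu
  have hB0 : 0 < B := lpNorm_pos hp hv
  have hAB : 0 < A + B := by linarith
  set u' : Fin 2 → ℝ := A⁻¹ • u with hu'
  set v' : Fin 2 → ℝ := B⁻¹ • v with hv'
  have hnu' : lpNorm p u' = 1 := by
    rw [hu', lpNorm_smul hp, abs_of_pos (inv_pos.mpr hA0), ← hA, inv_mul_cancel₀ hA0.ne']
  have hnv' : lpNorm p v' = 1 := by
    rw [hv', lpNorm_smul hp, abs_of_pos (inv_pos.mpr hB0), ← hB, inv_mul_cancel₀ hB0.ne']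
  set a := A / (A + B) with ha
  set b := B / (A + B) with hb
  have ha0 : 0 < a := div_pos hA0 hAB
  have hb0 : 0 < b := div_pos hB0 hAB
  have hab : a + b = 1 := by rw [ha, hb, ← add_div, div_self hAB.ne']
  -- midpoint
  have hmid : ∀ i : Fin 2, a * u' i + b * v' i = (A + B)⁻¹ * (u + v) i := by
    intro i
    have huvi : (u + v) i = u i + v i := rfl
    rw [huvi, hu', hv']
    simp only [Pi.smul_apply, smul_eq_mul, ha, hb]
    have h1 : A ≠ 0 := hA0.ne'
    have h2 : B ≠ 0 := hB0.ne'
    have h3 : A + B ≠ 0 := hAB.ne'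
    field_simp
  have hmideq : (fun i => a * u' i + b * v' i) = (A + B)⁻¹ • (u + v) := by
    funext i; rw [hmid i]; rfl
  have hmidnorm : lpNorm p ((A + B)⁻¹ • (u + v)) = 1 := by
    rw [lpNorm_smul hp, abs_of_pos (inv_pos.mpr hAB), h, inv_mul_cancel₀ hAB.ne']
  -- show u' = v'
  have huv' : u' = v' := by
    by_contra hne
    have hcoord : u' 0 ≠ v' 0 ∨ u' 1 ≠ v' 1 := by
      by_contra hc
      push_neg at hc
      exact hne (funext fun j => by fin_cases j <;> [exact hc.1; exact hc.2])
    have key : |a * u' 0 + b * v' 0| ^ p + |a * u' 1 + b * v' 1| ^ p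
        < a * (|u' 0| ^ p + |u' 1| ^ p) + b * (|v' 0| ^ p + |v' 1| ^ p) := by
      rcases hcoord with hi | hi
      · have s0 := abs_rpow_strict hp ha0 hb0 hab hi
        have s1 := abs_rpow_cvx (x := u' 1) (y := v' 1) hp ha0.le hb0.le hab
        linarith
      · have s0 := abs_rpow_cvx (x := u' 0) (y := v' 0) hp ha0.le hb0.le hab
        have s1 := abs_rpow_strict hp ha0 hb0 hab hi
        linarith
    have e1 : |u' 0| ^ p + |u' 1| ^ p = 1 := by
      rw [← lpNorm_rpow hp, hnu', one_rpow]
    have e2 : |v' 0| ^ p + |v' 1| ^ p = 1 := by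
      rw [← lpNorm_rpow hp, hnv', one_rpow]
    have e3 : |a * u' 0 + b * v' 0| ^ p + |a * u' 1 + b * v' 1| ^ p = 1 := by
      have h0 : a * u' 0 + b * v' 0 = ((A + B)⁻¹ • (u + v)) 0 := hmid 0
      have h1 : a * u' 1 + b * v' 1 = ((A + B)⁻¹ • (u + v)) 1 := hmid 1
      rw [h0, h1, ← lpNorm_rpow hp, hmidnorm, one_rpow]
    rw [e1, e2, e3, mul_one, mul_one, hab] at key
    exact lt_irrefl _ key
  refine ⟨A / B, div_pos hA0 hB0, ?_⟩
  have : A⁻¹ • u = B⁻¹ • v := huv'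
  calc u = A • (A⁻¹ • u) := by rw [smul_smul, mul_inv_cancel₀ hA0.ne', one_smul]
  _ = A • (B⁻¹ • v) := by rw [this]
  _ = (A / B) • v := by rw [smul_smul, div_eq_mul_inv]




lemma mid3 (r s u : ℝ) :
    |r - u| = |r - s| + |s - u| ∨ |r - s| = |r - u| + |u - s| ∨ |s - u| = |s - r| + |r - u| := by
  rcases le_total r s with h1 | h1 <;> rcases le_total s u with h2 | h2
  · left
    rw [abs_of_nonpos (by linarith : r - u ≤ 0), abs_of_nonpos (by linarith : r - s ≤ 0),
      abs_of_nonpos (by linarith : s - u ≤ 0)]; ring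
  · rcases le_total r u with h3 | h3
    · right; left
      rw [abs_of_nonpos (by linarith : r - s ≤ 0), abs_of_nonpos (by linarith : r - u ≤ 0),
        abs_of_nonpos (by linarith : u - s ≤ 0)]; ring
    · right; right
      rw [abs_of_nonneg (by linarith : 0 ≤ s - u), abs_of_nonneg (by linarith : 0 ≤ s - r),
        abs_of_nonneg (by linarith : 0 ≤ r - u)]; ring
  · rcases le_total r u with h3 | h3
    · right; right
      rw [abs_of_nonpos (by linarith : s - u ≤ 0), abs_of_nonpos (by linarith : s - r ≤ 0),
        abs_of_nonpos (by linarith : r - u ≤ 0)]; ring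
    · right; left
      rw [abs_of_nonneg (by linarith : 0 ≤ r - s), abs_of_nonneg (by linarith : 0 ≤ r - u),
        abs_of_nonneg (by linarith : 0 ≤ u - s)]; ring
  · left
    rw [abs_of_nonneg (by linarith : 0 ≤ r - u), abs_of_nonneg (by linarith : 0 ≤ r - s),
      abs_of_nonneg (by linarith : 0 ≤ s - u)]; ring

lemma image_on_line {p : ℝ} (hp : 1 < p) {M e : Set (Fin 2 → ℝ)} {a b : Fin 2 → ℝ}
    (hb : b ≠ 0) (hM : M ⊆ {x | ∃ t : ℝ, x = a + t • b})
    {g : (Fin 2 → ℝ) → (Fin 2 → ℝ)} (hbij : Set.BijOn g M e)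
    (hiso : ∀ x ∈ M, ∀ y ∈ M, lpNorm p (g x - g y) = lpNorm p (x - y))
    {mx my : Fin 2 → ℝ} (hmx : mx ∈ M) (hmy : my ∈ M) (hne : mx ≠ my) :
    ∀ m ∈ M, ∃ s : ℝ, g m = g mx + s • (g my - g mx) := by
  have hcb : 0 < lpNorm p b := lpNorm_pos hp hb
  set cb := lpNorm p b with hcbdef
  have hsub : ∀ t1 t2 : ℝ, (a + t1 • b) - (a + t2 • b) = (t1 - t2) • b := by
    intro t1 t2; module
  have hdistf : ∀ t1 t2 : ℝ, lpNorm p ((a + t1 • b) - (a + t2 • b)) = |t1 - t2| * cb := by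
    intro t1 t2; rw [hsub, lpNorm_smul hp]
  intro m hm
  by_cases hmmx : m = mx
  · exact ⟨0, by rw [hmmx]; simp⟩
  by_cases hmmy : m = my
  · exact ⟨1, by rw [hmmy]; module⟩
  obtain ⟨t, ht⟩ := hM hm
  obtain ⟨tx, htx⟩ := hM hmx
  obtain ⟨ty, hty⟩ := hM hmy
  have hInj := hbij.injOn
  have hgmx : g m ≠ g mx := fun hc => hmmx (hInj hm hmx hc)
  have hgmy : g m ≠ g my := fun hc => hmmy (hInj hm hmy hc)
  have hgxy : g mx ≠ g my := fun hc => hne (hInj hmx hmy hc)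
  -- distances
  have d_mmx : lpNorm p (g m - g mx) = |t - tx| * cb := by
    rw [hiso m hm mx hmx, ht, htx, hdistf]
  have d_mmy : lpNorm p (g m - g my) = |t - ty| * cb := by
    rw [hiso m hm my hmy, ht, hty, hdistf]
  have d_xy : lpNorm p (g mx - g my) = |tx - ty| * cb := by
    rw [hiso mx hmx my hmy, htx, hty, hdistf]
  rcases mid3 t tx ty with hmid | hmid | hmid
  · -- tx in the middle : ‖gm - gmy‖ = ‖gm - gmx‖ + ‖gmx - gmy‖
    have heq : lpNorm p ((g m - g mx) + (g mx - g my))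
        = lpNorm p (g m - g mx) + lpNorm p (g mx - g my) := by
      rw [sub_add_sub_cancel, d_mmy, d_mmx, d_xy, hmid, add_mul]
    obtain ⟨c, hc0, hc⟩ := lpNorm_add_eq hp (sub_ne_zero.mpr hgmx) (sub_ne_zero.mpr hgxy) heq
    refine ⟨-c, ?_⟩
    funext i
    have hci := congrFun hc i
    simp only [Pi.sub_apply, Pi.smul_apply, smul_eq_mul, Pi.add_apply] at hci ⊢
    linarith
  · -- ty in the middle : ‖gm - gmx‖ = ‖gm - gmy‖ + ‖gmy - gmx‖
    have heq : lpNorm p ((g m - g my) + (g my - g mx))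
        = lpNorm p (g m - g my) + lpNorm p (g my - g mx) := by
      have d_yx : lpNorm p (g my - g mx) = |ty - tx| * cb := by
        rw [hiso my hmy mx hmx, hty, htx, hdistf]
      rw [sub_add_sub_cancel, d_mmx, d_mmy, d_yx, hmid, add_mul]
    obtain ⟨c, hc0, hc⟩ := lpNorm_add_eq hp (sub_ne_zero.mpr hgmy)
      (sub_ne_zero.mpr hgxy.symm) heq
    refine ⟨1 + c, ?_⟩
    funext i
    have hci := congrFun hc i
    simp only [Pi.sub_apply, Pi.smul_apply, smul_eq_mul, Pi.add_apply] at hci ⊢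
    linarith
  · -- t in the middle : ‖gmx - gmy‖ = ‖gmx - gm‖ + ‖gm - gmy‖
    have heq : lpNorm p ((g mx - g m) + (g m - g my))
        = lpNorm p (g mx - g m) + lpNorm p (g m - g my) := by
      have d_xm : lpNorm p (g mx - g m) = |tx - t| * cb := by
        rw [hiso mx hmx m hm, htx, ht, hdistf]
      rw [sub_add_sub_cancel, d_xy, d_xm, d_mmy, hmid, add_mul]
    obtain ⟨c, hc0, hc⟩ := lpNorm_add_eq hp (sub_ne_zero.mpr hgmx.symm)
      (sub_ne_zero.mpr hgmy) heq
    refine ⟨c / (1 + c), ?_⟩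
    have h1c : (1 : ℝ) + c ≠ 0 := by positivity
    funext i
    have hci := congrFun hc i
    simp only [Pi.sub_apply, Pi.smul_apply, smul_eq_mul, Pi.add_apply] at hci ⊢
    field_simp
    nlinarith [hci]

/-- If `M ⊆ ℝ²` is infinite, collinear, and has pairwise distinct ℓ_p-distances, then two
ℓ_p-isometric copies of `M` sharing at least three points coincide. -/
theorem collinear_copies_eq_of_three_common_points (p : ℝ) (hp : 1 < p)
    (M : Set (Fin 2 → ℝ)) (hMinf : M.Infinite)
    (hline : ∃ a b : Fin 2 → ℝ, b ≠ 0 ∧ M ⊆ {x | ∃ t : ℝ, x = a + t • b})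
    (hdist : ∀ x ∈ M, ∀ x' ∈ M, ∀ y ∈ M, ∀ y' ∈ M, x ≠ x' → y ≠ y' →
      lpNorm p (x - x') = lpNorm p (y - y') → ({x, x'} : Set (Fin 2 → ℝ)) = {y, y'})
    (e f : Set (Fin 2 → ℝ))
    (he : IsometricCopy (lpNorm p) M e) (hf : IsometricCopy (lpNorm p) M f)
    (hcommon : ∃ x ∈ e ∩ f, ∃ y ∈ e ∩ f, ∃ z ∈ e ∩ f, x ≠ y ∧ x ≠ z ∧ y ≠ z) :
    e = f := by
  obtain ⟨g, hgbij, hgiso⟩ := he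
  obtain ⟨h, hhbij, hhiso⟩ := hf
  obtain ⟨x, ⟨hxe, hxf⟩, y, ⟨hye, hyf⟩, z, ⟨hze, hzf⟩, hxy, hxz, hyz⟩ := hcommon
  obtain ⟨a, b, hb, hM⟩ := hline
  obtain ⟨mx, hmxM, hgmx⟩ := hgbij.surjOn hxe
  obtain ⟨my, hmyM, hgmy⟩ := hgbij.surjOn hye
  obtain ⟨mz, hmzM, hgmz⟩ := hgbij.surjOn hze
  obtain ⟨nx, hnxM, hhnx⟩ := hhbij.surjOn hxf
  obtain ⟨ny, hnyM, hhny⟩ := hhbij.surjOn hyf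
  obtain ⟨nz, hnzM, hhnz⟩ := hhbij.surjOn hzf
  have hmxy : mx ≠ my := fun hc => hxy (by rw [← hgmx, ← hgmy, hc])
  have hmxz : mx ≠ mz := fun hc => hxz (by rw [← hgmx, ← hgmz, hc])
  have hnxy : nx ≠ ny := fun hc => hxy (by rw [← hhnx, ← hhny, hc])
  have hnxz : nx ≠ nz := fun hc => hxz (by rw [← hhnx, ← hhnz, hc])
  have hnyz : ny ≠ nz := fun hc => hyz (by rw [← hhny, ← hhnz, hc])
  have key_xy : ({mx, my} : Set (Fin 2 → ℝ)) = {nx, ny} := by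
    refine hdist mx hmxM my hmyM nx hnxM ny hnyM hmxy hnxy ?_
    rw [← hgiso mx hmxM my hmyM, ← hhiso nx hnxM ny hnyM, hgmx, hgmy, hhnx, hhny]
  have key_xz : ({mx, mz} : Set (Fin 2 → ℝ)) = {nx, nz} := by
    refine hdist mx hmxM mz hmzM nx hnxM nz hnzM hmxz hnxz ?_
    rw [← hgiso mx hmxM mz hmzM, ← hhiso nx hnxM nz hnzM, hgmx, hgmz, hhnx, hhnz]
  have p1 := Set.pair_eq_pair_iff.mp key_xy
  have p2 := Set.pair_eq_pair_iff.mp key_xz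
  have hmatch : mx = nx ∧ my = ny := by
    rcases p1 with ⟨e1, e2⟩ | ⟨e1, e2⟩
    · exact ⟨e1, e2⟩
    · rcases p2 with ⟨e3, e4⟩ | ⟨e3, e4⟩
      · exact absurd (e3 ▸ e1 : nx = ny).symm hnxy.symm
      · exact absurd (e3 ▸ e1 : nz = ny) hnyz.symm
  obtain ⟨hmxnx, hmyny⟩ := hmatch
  have hhmx : h mx = x := by rw [hmxnx, hhnx]
  have hhmy : h my = y := by rw [hmyny, hhny]
  -- both copies lie on the line through x and y
  have hlineE : ∀ w ∈ e, ∃ s : ℝ, w = x + s • (y - x) := by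
    intro w hw
    obtain ⟨m, hmM, hgm⟩ := hgbij.surjOn hw
    obtain ⟨s, hs⟩ := image_on_line hp hb hM hgbij hgiso hmxM hmyM hmxy m hmM
    exact ⟨s, by rw [← hgm, hs, hgmx, hgmy]⟩
  have hlineF : ∀ w ∈ f, ∃ s : ℝ, w = x + s • (y - x) := by
    intro w hw
    obtain ⟨m, hmM, hhm⟩ := hhbij.surjOn hw
    obtain ⟨s, hs⟩ := image_on_line hp hb hM hhbij hhiso hmxM hmyM hmxy m hmM
    exact ⟨s, by rw [← hhm, hs, hhmx, hhmy]⟩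
  have hyx : y - x ≠ 0 := sub_ne_zero.mpr (Ne.symm hxy)
  have hcyx : 0 < lpNorm p (y - x) := lpNorm_pos hp hyx
  have hgh : Set.EqOn g h M := by
    intro m hm
    obtain ⟨s, hs⟩ := hlineE (g m) (hgbij.mapsTo hm)
    obtain ⟨s', hs'⟩ := hlineF (h m) (hhbij.mapsTo hm)
    have e1 : lpNorm p (g m - x) = |s| * lpNorm p (y - x) := by
      rw [show g m - x = s • (y - x) by rw [hs]; module, lpNorm_smul hp]
    have e2 : lpNorm p (h m - x) = |s'| * lpNorm p (y - x) := by
      rw [show h m - x = s' • (y - x) by rw [hs']; module, lpNorm_smul hp]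
    have e3 : lpNorm p (g m - y) = |s - 1| * lpNorm p (y - x) := by
      rw [show g m - y = (s - 1) • (y - x) by rw [hs]; module, lpNorm_smul hp]
    have e4 : lpNorm p (h m - y) = |s' - 1| * lpNorm p (y - x) := by
      rw [show h m - y = (s' - 1) • (y - x) by rw [hs']; module, lpNorm_smul hp]
    have d1 : lpNorm p (g m - x) = lpNorm p (h m - x) := by
      conv_lhs => rw [← hgmx]
      conv_rhs => rw [← hhmx]
      rw [hgiso m hm mx hmxM, hhiso m hm mx hmxM]
    have d2 : lpNorm p (g m - y) = lpNorm p (h m - y) := by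
      conv_lhs => rw [← hgmy]
      conv_rhs => rw [← hhmy]
      rw [hgiso m hm my hmyM, hhiso m hm my hmyM]
    have habs1 : |s| = |s'| := mul_right_cancel₀ hcyx.ne' (by rw [← e1, ← e2, d1])
    have habs2 : |s - 1| = |s' - 1| := mul_right_cancel₀ hcyx.ne' (by rw [← e3, ← e4, d2])
    have hss' : s = s' := by
      rcases abs_eq_abs.mp habs1 with h1 | h1 <;> rcases abs_eq_abs.mp habs2 with h2 | h2 <;>
        linarith
    rw [hs, hs', hss']
  rw [← hgbij.image_eq, ← hhbij.image_eq]
  exact Set.image_congr hgh
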